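/- Let (Ω, 𝔉, ℙ) be a probability space, m a positive integer, α ∈ (0,1], and H₀ ⊆ {1,...,m}. Let X : Ω → E be a random element of a measurable space E, and for each i ∈ {1,...,m} let p_i : E → [0,1], τ_i : E → [0,1], and R̂_i : E → {1,2,...,m} be measurable. Let u₁,...,u_m be i.i.d. Uniform(0,1) random variables independent of X. Define the initial rejection set ℛ₊(x) = {i : p_i(x) ≤ τ_i(x)}, the pruned rejection count R(x,u) = max{r ∈ {0,1,...,m} : |{j ∈ ℛ₊(x) : u_j ≤ r/R̂_j(x)}| ≥ r}, and the final rejection set ℛ(x,u) = {i ∈ ℛ₊(x) : u_i ≤ R(x,u)/R̂_i(x)}. Assume the calibration condition: for every i ∈ H₀, E[ 1{p_i(X) ≤ τ_i(X)} / R̂_i(X) ] ≤ α/m. Then the false discovery rate satisfies E[ |ℛ(X,u) ∩ H₀| / max(|ℛ(X,u)|, 1) ] ≤ α·|H₀|/m. -/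

import Mathlib

open MeasureTheory ProbabilityTheory Classical

/-- The initial rejection set `ℛ₊ = {i : p_i ≤ τ_i}`, given the vectors of p-values and
calibrated thresholds. -/
noncomputable def initRej {m : ℕ} (pv τv : Fin m → ℝ) : Finset (Fin m) :=
  Finset.univ.filter (fun i => pv i ≤ τv i)

/-- The pruned rejection count
`R = max {r ∈ {0,…,m} : |{j ∈ ℛ₊ : u_j ≤ r / R̂_j}| ≥ r}` of the secondary BH-type
procedure applied to the auxiliary uniforms. -/
noncomputable def pruneCount {m : ℕ} (Rplus : Finset (Fin m)) (Rhat : Fin m → ℕ)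
    (u : Fin m → ℝ) : ℕ :=
  Nat.findGreatest
    (fun r => r ≤ (Rplus.filter (fun j => u j ≤ (r : ℝ) / (Rhat j : ℝ))).card) m

/-- The final rejection set `ℛ = {i ∈ ℛ₊ : u_i ≤ R / R̂_i}`. -/
noncomputable def finalRej {m : ℕ} (Rplus : Finset (Fin m)) (Rhat : Fin m → ℕ)
    (u : Fin m → ℝ) : Finset (Fin m) :=
  Rplus.filter (fun i => u i ≤ (pruneCount Rplus Rhat u : ℝ) / (Rhat i : ℝ))

section Comb

variable {m : ℕ} (Rplus : Finset (Fin m)) (Rhat : Fin m → ℕ) (v : Fin m → ℝ)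

lemma div_mono_nat {a b : ℕ} (h : a ≤ b) (c : ℕ) : (a : ℝ) / (c : ℝ) ≤ (b : ℝ) / (c : ℝ) := by
  exact div_le_div_of_nonneg_right (Nat.cast_le.mpr h) (Nat.cast_nonneg c)

lemma pruneCount_le : pruneCount Rplus Rhat v ≤ m := Nat.findGreatest_le m

lemma pruneCount_spec :
    pruneCount Rplus Rhat v
      ≤ (Rplus.filter (fun j => v j ≤ (pruneCount Rplus Rhat v : ℝ) / (Rhat j : ℝ))).card := by
  exact Nat.findGreatest_spec
    (P := fun r => r ≤ (Rplus.filter (fun j => v j ≤ (r : ℝ) / (Rhat j : ℝ))).card)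
    (Nat.zero_le m) (Nat.zero_le _)

lemma card_finalRej : (finalRej Rplus Rhat v).card = pruneCount Rplus Rhat v := by
  set R := pruneCount Rplus Rhat v with hR
  have h1 : R ≤ (finalRej Rplus Rhat v).card := pruneCount_spec Rplus Rhat v
  refine le_antisymm ?_ h1
  have hsub : finalRej Rplus Rhat v ⊆
      Rplus.filter (fun j => v j ≤ ((finalRej Rplus Rhat v).card : ℝ) / (Rhat j : ℝ)) := by
    intro j hj
    rw [finalRej, Finset.mem_filter] at hj
    refine Finset.mem_filter.2 ⟨hj.1, le_trans hj.2 (div_mono_nat h1 _)⟩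
  have hcardle : (finalRej Rplus Rhat v).card ≤ m :=
    le_trans (Finset.card_le_card hsub) (le_trans (Finset.card_filter_le _ _)
      (le_trans (Finset.card_le_univ _) (by simp)))
  exact Nat.le_findGreatest hcardle (Finset.card_le_card hsub)


variable (i : Fin m)

lemma pruneCount_le_update :
    pruneCount Rplus Rhat v ≤ pruneCount Rplus Rhat (Function.update v i 0) := by
  set R := pruneCount Rplus Rhat v with hR
  refine Nat.le_findGreatest (pruneCount_le Rplus Rhat v) ?_
  refine le_trans (pruneCount_spec Rplus Rhat v) (Finset.card_le_card ?_)
  intro j hj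
  rw [Finset.mem_filter] at hj ⊢
  refine ⟨hj.1, ?_⟩
  rcases eq_or_ne j i with rfl | hne
  · rw [Function.update_self]
    positivity
  · rw [Function.update_of_ne hne]
    exact hj.2

lemma pruneCount_update_eq (h : v i ≤ (pruneCount Rplus Rhat (Function.update v i 0) : ℝ) / (Rhat i : ℝ)) :
    pruneCount Rplus Rhat v = pruneCount Rplus Rhat (Function.update v i 0) := by
  refine le_antisymm (pruneCount_le_update Rplus Rhat v i) ?_
  set Ri := pruneCount Rplus Rhat (Function.update v i 0) with hRi
  refine Nat.le_findGreatest (pruneCount_le Rplus Rhat _) ?_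
  refine le_trans (pruneCount_spec Rplus Rhat (Function.update v i 0)) (Finset.card_le_card ?_)
  intro j hj
  rw [Finset.mem_filter] at hj ⊢
  refine ⟨hj.1, ?_⟩
  rcases eq_or_ne j i with rfl | hne
  · exact h
  · rw [Function.update_of_ne hne] at hj
    exact hj.2

lemma le_pruneCount_iff_update :
    v i ≤ (pruneCount Rplus Rhat v : ℝ) / (Rhat i : ℝ) ↔
      v i ≤ (pruneCount Rplus Rhat (Function.update v i 0) : ℝ) / (Rhat i : ℝ) := by
  constructor
  · intro h
    exact le_trans h (div_mono_nat (pruneCount_le_update Rplus Rhat v i) _)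
  · intro h
    rw [pruneCount_update_eq Rplus Rhat v i h]
    exact h

lemma pruneCount_eq_of_le (h : v i ≤ (pruneCount Rplus Rhat v : ℝ) / (Rhat i : ℝ)) :
    pruneCount Rplus Rhat v = pruneCount Rplus Rhat (Function.update v i 0) :=
  pruneCount_update_eq Rplus Rhat v i ((le_pruneCount_iff_update Rplus Rhat v i).1 h)

lemma mem_finalRej_iff :
    i ∈ finalRej Rplus Rhat v ↔ i ∈ Rplus ∧
      v i ≤ (pruneCount Rplus Rhat (Function.update v i 0) : ℝ) / (Rhat i : ℝ) := by
  rw [finalRej, Finset.mem_filter, le_pruneCount_iff_update]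

lemma indicator_div_max_eq (i : Fin m) :
    (if i ∈ finalRej Rplus Rhat v then (1 : ℝ) else 0)
      / ((max (finalRej Rplus Rhat v).card 1 : ℕ) : ℝ)
    = if (i ∈ Rplus ∧
          v i ≤ ((pruneCount Rplus Rhat (Function.update v i 0) : ℕ) : ℝ) / (Rhat i : ℝ))
      then (1 : ℝ) / ((max (pruneCount Rplus Rhat (Function.update v i 0)) 1 : ℕ) : ℝ)
      else 0 := by
  by_cases h : i ∈ finalRej Rplus Rhat v
  · have h' := (mem_finalRej_iff Rplus Rhat v i).1 h
    have hle : v i ≤ (pruneCount Rplus Rhat v : ℝ) / (Rhat i : ℝ) :=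
      (Finset.mem_filter.1 h).2
    rw [if_pos h, if_pos h', card_finalRej, pruneCount_eq_of_le Rplus Rhat v i hle]
  · rw [if_neg h, if_neg (fun hc => h ((mem_finalRej_iff Rplus Rhat v i).2 hc))]
    simp

end Comb

section Meas

variable {α : Type*} [MeasurableSpace α] {m : ℕ}

lemma meas_findGreatest {Q : ℕ → α → Prop} [∀ r z, Decidable (Q r z)] (n : ℕ)
    (hQ : ∀ r, MeasurableSet {z | Q r z}) :
    Measurable fun z => Nat.findGreatest (fun r => Q r z) n := by
  induction n with
  | zero => simpa using measurable_const
  | succ n ih =>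
    have h : (fun z => Nat.findGreatest (fun r => Q r z) (n + 1))
        = fun z => if Q (n + 1) z then n + 1 else Nat.findGreatest (fun r => Q r z) n := by
      funext z
      exact Nat.findGreatest_succ n
    rw [h]
    exact Measurable.ite (hQ (n + 1)) measurable_const ih

variable {P' T' : Fin m → α → ℝ} {Rh : Fin m → α → ℕ} {w : α → Fin m → ℝ}

lemma measurable_nat_cast_real {f : α → ℕ} (hf : Measurable f) :
    Measurable fun z => ((f z : ℝ)) :=
  (measurable_from_top (f := (Nat.cast : ℕ → ℝ))).comp hf

lemma measurableSet_le_div {g : α → ℝ} {c : α → ℕ} (hg : Measurable g) (hc : Measurable c)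
    (i : Fin m) (hR : ∀ j, Measurable (Rh j)) :
    MeasurableSet {z | g z ≤ (c z : ℝ) / (Rh i z : ℝ)} :=
  measurableSet_le hg ((measurable_nat_cast_real hc).div (measurable_nat_cast_real (hR i)))

lemma measurable_cardFilter (hP : ∀ j, Measurable (P' j)) (hT : ∀ j, Measurable (T' j))
    (hR : ∀ j, Measurable (Rh j)) (hw : Measurable w) {c : α → ℕ} (hc : Measurable c) :
    Measurable fun z =>
      ((initRej (fun j => P' j z) (fun j => T' j z)).filter
        (fun j => w z j ≤ (c z : ℝ) / (Rh j z : ℝ))).card := by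
  have h : (fun z =>
      ((initRej (fun j => P' j z) (fun j => T' j z)).filter
        (fun j => w z j ≤ (c z : ℝ) / (Rh j z : ℝ))).card)
      = fun z => ∑ j : Fin m,
          if (P' j z ≤ T' j z ∧ w z j ≤ (c z : ℝ) / (Rh j z : ℝ)) then 1 else 0 := by
    funext z
    rw [initRej, Finset.filter_filter, Finset.card_filter]
  rw [h]
  refine Finset.measurable_sum _ (fun j _ => ?_)
  refine Measurable.ite ?_ measurable_const measurable_const
  exact ((measurableSet_le (hP j) (hT j)).inter
    (measurableSet_le_div ((measurable_pi_apply j).comp hw) hc j hR))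

lemma measurable_pruneCount (hP : ∀ j, Measurable (P' j)) (hT : ∀ j, Measurable (T' j))
    (hR : ∀ j, Measurable (Rh j)) (hw : Measurable w) :
    Measurable fun z =>
      pruneCount (initRej (fun j => P' j z) (fun j => T' j z)) (fun j => Rh j z) (w z) := by
  unfold pruneCount
  refine meas_findGreatest (Q := fun r z =>
    r ≤ ((initRej (fun j => P' j z) (fun j => T' j z)).filter
      (fun j => w z j ≤ (r : ℝ) / (Rh j z : ℝ))).card) m (fun r => ?_)
  have hcard := measurable_cardFilter hP hT hR hw (c := fun _ => r) measurable_const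
  exact hcard (measurableSet_Ici (a := r))

end Meas

section Aux

variable {m : ℕ} {E : Type*}

/-- pruneCount with coordinate `i` zeroed out, as a function on `E × (Fin m → ℝ)`. -/
noncomputable def RCi' (p τ : Fin m → E → ℝ) (Rhat : Fin m → E → ℕ) (i : Fin m)
    (z : E × (Fin m → ℝ)) : ℕ :=
  pruneCount (initRej (fun j => p j z.1) (fun j => τ j z.1)) (fun j => Rhat j z.1)
    (Function.update z.2 i 0)

/-- The leave-one-out integrand. -/
noncomputable def gFun (p τ : Fin m → E → ℝ) (Rhat : Fin m → E → ℕ) (i : Fin m)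
    (z : E × (Fin m → ℝ)) : ℝ :=
  if (p i z.1 ≤ τ i z.1 ∧ z.2 i ≤ ((RCi' p τ Rhat i z : ℕ) : ℝ) / (Rhat i z.1 : ℝ))
  then (1 : ℝ) / ((max (RCi' p τ Rhat i z) 1 : ℕ) : ℝ) else 0

variable [MeasurableSpace E] {p τ : Fin m → E → ℝ} {Rhat : Fin m → E → ℕ}

lemma measurable_RCi' (hp : ∀ j, Measurable (p j)) (hτ : ∀ j, Measurable (τ j))
    (hR : ∀ j, Measurable (Rhat j)) (i : Fin m) : Measurable (RCi' p τ Rhat i) :=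
  measurable_pruneCount (fun j => (hp j).comp measurable_fst)
    (fun j => (hτ j).comp measurable_fst) (fun j => (hR j).comp measurable_fst)
    ((measurable_update_left (a := i) (x := 0)).comp measurable_snd)

lemma measurable_gFun (hp : ∀ j, Measurable (p j)) (hτ : ∀ j, Measurable (τ j))
    (hR : ∀ j, Measurable (Rhat j)) (i : Fin m) : Measurable (gFun p τ Rhat i) := by
  unfold gFun
  refine Measurable.ite ?_ ?_ measurable_const
  · rw [Set.setOf_and]
    exact (measurableSet_le ((hp i).comp measurable_fst) ((hτ i).comp measurable_fst)).inter
      (measurableSet_le_div ((measurable_pi_apply i).comp measurable_snd)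
        (measurable_RCi' hp hτ hR i) i (fun j => (hR j).comp measurable_fst))
  · exact measurable_const.div
      (measurable_nat_cast_real ((measurable_from_top (f := fun n : ℕ => max n 1)).comp
        (measurable_RCi' hp hτ hR i)))

lemma gFun_nonneg (i : Fin m) (z : E × (Fin m → ℝ)) : 0 ≤ gFun p τ Rhat i z := by
  unfold gFun; split_ifs <;> positivity

lemma gFun_le_one (i : Fin m) (z : E × (Fin m → ℝ)) : gFun p τ Rhat i z ≤ 1 := by
  unfold gFun
  split_ifs
  · refine div_le_one_of_le₀ ?_ (by positivity)
    exact_mod_cast Nat.one_le_cast.mpr (le_max_right _ 1)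
  · norm_num

lemma abs_gFun_le_one (i : Fin m) (z : E × (Fin m → ℝ)) : |gFun p τ Rhat i z| ≤ 1 := by
  rw [abs_le]; exact ⟨by linarith [gFun_nonneg (p := p) (τ := τ) (Rhat := Rhat) i z], gFun_le_one i z⟩

end Aux

lemma integrable_of_bound {α : Type*} [MeasurableSpace α] (μ : Measure α) [IsFiniteMeasure μ]
    {f : α → ℝ} (hf : Measurable f) (C : ℝ) (h : ∀ a, |f a| ≤ C) : Integrable f μ :=
  ⟨hf.aestronglyMeasurable,
    MeasureTheory.HasFiniteIntegral.of_bounded (C := C)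
      (ae_of_all _ (by simpa [Real.norm_eq_abs] using h))⟩

section Decomp

variable {m : ℕ} {E : Type*} {p τ : Fin m → E → ℝ} {Rhat : Fin m → E → ℕ}

lemma sum_gFun_eq (H0 : Finset (Fin m)) (z : E × (Fin m → ℝ)) :
    ((finalRej (initRej (fun j => p j z.1) (fun j => τ j z.1)) (fun j => Rhat j z.1) z.2
        ∩ H0).card : ℝ) /
      ((max (finalRej (initRej (fun j => p j z.1) (fun j => τ j z.1)) (fun j => Rhat j z.1)
        z.2).card 1 : ℕ) : ℝ)
    = ∑ i ∈ H0, gFun p τ Rhat i z := by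
  set S := finalRej (initRej (fun j => p j z.1) (fun j => τ j z.1)) (fun j => Rhat j z.1) z.2
    with hS
  have hnum : ((S ∩ H0).card : ℝ) = ∑ i ∈ H0, (if i ∈ S then (1 : ℝ) else 0) := by
    rw [Finset.inter_comm, ← Finset.filter_mem_eq_inter, Finset.card_filter]
    push_cast
    rfl
  rw [hnum, Finset.sum_div]
  refine Finset.sum_congr rfl (fun i hi => ?_)
  rw [hS, indicator_div_max_eq]
  unfold gFun RCi'
  refine if_congr ?_ rfl rfl
  rw [and_congr_left_iff]
  intro _
  simp [initRej]

end Decomp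

section Inner

lemma integral_ite_unif {Ω : Type*} [MeasurableSpace Ω] (P : Measure Ω) [IsProbabilityMeasure P]
    {g : Ω → ℝ} (hg : Measurable g) (hunif : P.map g = volume.restrict (Set.Icc (0 : ℝ) 1))
    {c : ℝ} (hc : 0 ≤ c) :
    ∫ ω, (if g ω ≤ c then (1 : ℝ) else 0) ∂P ≤ c := by
  have hs : MeasurableSet {ω | g ω ≤ c} := measurableSet_le hg measurable_const
  have h1 : (fun ω => if g ω ≤ c then (1 : ℝ) else 0)
      = Set.indicator {ω | g ω ≤ c} (fun _ => (1 : ℝ)) := by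
    funext ω; by_cases h : g ω ≤ c <;> simp [Set.indicator_apply, h]
  rw [h1, integral_indicator_const (1 : ℝ) hs, smul_eq_mul, mul_one]
  have h2 : P {ω | g ω ≤ c} = (P.map g) (Set.Iic c) := by
    rw [Measure.map_apply hg measurableSet_Iic]; rfl
  rw [measureReal_def, h2, hunif, Measure.restrict_apply measurableSet_Iic]
  have h3 : Set.Iic c ∩ Set.Icc (0 : ℝ) 1 ⊆ Set.Icc 0 c := fun t ht => ⟨ht.2.1, ht.1⟩
  calc (volume (Set.Iic c ∩ Set.Icc (0 : ℝ) 1)).toReal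
      ≤ (volume (Set.Icc (0 : ℝ) c)).toReal := by
        refine ENNReal.toReal_mono ?_ (measure_mono h3)
        rw [Real.volume_Icc]; exact ENNReal.ofReal_ne_top
    _ = c := by rw [Real.volume_Icc, sub_zero, ENNReal.toReal_ofReal hc]

lemma indepFun_RCi_ui {Ω E : Type*} [MeasurableSpace Ω] [MeasurableSpace E] {P : Measure Ω}
    {m : ℕ} {p τ : Fin m → E → ℝ} {Rhat : Fin m → E → ℕ}
    (u : Fin m → Ω → ℝ) (humeas : ∀ i, Measurable (u i))
    (huindep : iIndepFun u P)
    (i : Fin m) (x : E) (k : ℕ) (c : ℝ) :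
    IndepFun (fun ω => (if RCi' p τ Rhat i (x, fun j => u j ω) = k then (1 : ℝ) else 0))
      (fun ω => (if u i ω ≤ c then (1 : ℝ) else 0)) P := by
  classical
  set S : Finset (Fin m) := Finset.univ.erase i with hSdef
  set emb : ({j // j ∈ S} → ℝ) → (Fin m → ℝ) :=
    (fun w j => if h : j ∈ S then w ⟨j, h⟩ else 0) with hembdef
  have hembmeas : Measurable emb := by
    refine measurable_pi_lambda _ (fun j => ?_)
    by_cases h : j ∈ S
    · simp only [hembdef, dif_pos h]; exact measurable_pi_apply _
    · simp only [hembdef, dif_neg h]; exact measurable_const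
  have hembu : ∀ v : Fin m → ℝ, emb (fun j => v j) = Function.update v i 0 := by
    intro v; funext j
    by_cases h : j = i
    · subst h
      rw [Function.update_self]
      exact dif_neg (by simp [hSdef])
    · rw [Function.update_of_ne h]
      exact dif_pos (by simp [hSdef, h])
  have hdisj : Disjoint S ({i} : Finset (Fin m)) :=
    Finset.disjoint_singleton_right.2 (Finset.notMem_erase i _)
  have hbase := huindep.indepFun_finset S {i} hdisj humeas
  have hΦA : Measurable (fun w : ({j // j ∈ S} → ℝ) =>
      if pruneCount (initRej (fun j => p j x) (fun j => τ j x)) (fun j => Rhat j x) (emb w) = k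
      then (1 : ℝ) else 0) := by
    refine Measurable.ite ?_ measurable_const measurable_const
    exact (measurable_pruneCount (fun j => measurable_const) (fun j => measurable_const)
      (fun j => measurable_const) hembmeas) (measurableSet_singleton k)
  have hΦB : Measurable (fun w : ({j // j ∈ ({i} : Finset (Fin m))} → ℝ) =>
      if w ⟨i, Finset.mem_singleton_self i⟩ ≤ c then (1 : ℝ) else 0) :=
    Measurable.ite (measurableSet_le (measurable_pi_apply _) measurable_const)
      measurable_const measurable_const
  have hcomp := hbase.comp hΦA hΦB
  have h1 : (fun ω => (if RCi' p τ Rhat i (x, fun j => u j ω) = k then (1 : ℝ) else 0))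
      = (fun w : ({j // j ∈ S} → ℝ) =>
          if pruneCount (initRej (fun j => p j x) (fun j => τ j x)) (fun j => Rhat j x) (emb w) = k
          then (1 : ℝ) else 0) ∘ (fun ω (j : {j // j ∈ S}) => u j ω) := by
    funext ω
    have h := congrArg (fun t => if pruneCount (initRej (fun j => p j x) (fun j => τ j x))
      (fun j => Rhat j x) t = k then (1 : ℝ) else 0) (hembu (fun j => u j ω))
    exact h.symm
  rw [h1]
  exact hcomp

end Inner

lemma abs_ite_mul_le (c1 c2 : Prop) [Decidable c1] [Decidable c2] {C : ℝ}
    (h0 : 0 ≤ C) (h1 : C ≤ 1) :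
    |((if c1 then (1 : ℝ) else 0) * (if c2 then (1 : ℝ) else 0)) * C| ≤ 1 := by
  split_ifs <;> simp [abs_of_nonneg, h0, h1]

lemma inner_integral_bound
    {Ω E : Type*} [MeasurableSpace Ω] [MeasurableSpace E]
    (P : Measure Ω) [IsProbabilityMeasure P]
    {m : ℕ} {p τ : Fin m → E → ℝ} {Rhat : Fin m → E → ℕ}
    (hpmeas : ∀ i, Measurable (p i)) (hτmeas : ∀ i, Measurable (τ i))
    (hRmeas : ∀ i, Measurable (Rhat i))
    (hRval : ∀ i x, Rhat i x ∈ Set.Icc 1 m)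
    (u : Fin m → Ω → ℝ) (humeas : ∀ i, Measurable (u i))
    (huindep : iIndepFun u P)
    (huunif : ∀ i, P.map (u i) = volume.restrict (Set.Icc (0 : ℝ) 1))
    (i : Fin m) (x : E) :
    ∫ v, gFun p τ Rhat i (x, v) ∂(P.map (fun ω (j : Fin m) => u j ω))
      ≤ (if p i x ≤ τ i x then (1 : ℝ) / (Rhat i x : ℝ) else 0) := by
  classical
  have hU : Measurable (fun ω (j : Fin m) => u j ω) := measurable_pi_lambda _ humeas
  set π : Measure (Fin m → ℝ) := P.map (fun ω (j : Fin m) => u j ω) with hπdef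
  haveI : IsProbabilityMeasure π := Measure.isProbabilityMeasure_map hU.aemeasurable
  have hint : ∀ f : (Fin m → ℝ) → ℝ, Measurable f →
      ∫ v, f v ∂π = ∫ ω, f (fun j => u j ω) ∂P := by
    intro f hf
    rw [hπdef]
    exact integral_map hU.aemeasurable hf.aestronglyMeasurable
  by_cases hx : p i x ≤ τ i x
  swap
  · have h0 : ∀ v : Fin m → ℝ, gFun p τ Rhat i (x, v) = 0 := by
      intro v; unfold gFun; exact if_neg (fun hc => hx hc.1)
    have hz : ∫ v, gFun p τ Rhat i (x, v) ∂π = 0 := by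
      rw [integral_congr_ae (ae_of_all _ h0), integral_zero]
    rw [if_neg hx, hz]
  · rw [if_pos hx]
    have hd : (1 : ℝ) ≤ (Rhat i x : ℝ) := by exact_mod_cast (hRval i x).1
    have hd0 : (0 : ℝ) < (Rhat i x : ℝ) := lt_of_lt_of_le zero_lt_one hd
    have haF : ∀ k : ℕ, Measurable
        (fun v : Fin m → ℝ => if RCi' p τ Rhat i (x, v) = k then (1 : ℝ) else 0) := fun k =>
      Measurable.ite (((measurable_RCi' hpmeas hτmeas hRmeas i).comp measurable_prodMk_left)
        (measurableSet_singleton k)) measurable_const measurable_const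
    have hbF : ∀ k : ℕ, Measurable
        (fun v : Fin m → ℝ => if v i ≤ (k : ℝ) / (Rhat i x : ℝ) then (1 : ℝ) else 0) := fun k =>
      Measurable.ite (measurableSet_le (measurable_pi_apply i) measurable_const)
        measurable_const measurable_const
    have hCk : ∀ k : ℕ, 0 ≤ (1 : ℝ) / ((max k 1 : ℕ) : ℝ) ∧ (1 : ℝ) / ((max k 1 : ℕ) : ℝ) ≤ 1 := by
      intro k
      constructor
      · positivity
      · refine div_le_one_of_le₀ ?_ (by positivity)
        exact_mod_cast Nat.one_le_cast.mpr (le_max_right k 1)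
    have hgx : ∀ v : Fin m → ℝ, gFun p τ Rhat i (x, v)
        = ∑ k ∈ Finset.range (m + 1),
            ((if RCi' p τ Rhat i (x, v) = k then (1 : ℝ) else 0)
              * (if v i ≤ (k : ℝ) / (Rhat i x : ℝ) then (1 : ℝ) else 0))
              * ((1 : ℝ) / ((max k 1 : ℕ) : ℝ)) := by
      intro v
      have hmem : RCi' p τ Rhat i (x, v) ∈ Finset.range (m + 1) :=
        Finset.mem_range.2 (Nat.lt_succ_of_le (pruneCount_le _ _ _))
      rw [Finset.sum_eq_single_of_mem _ hmem
        (fun k _ hne => by rw [if_neg (fun h => hne h.symm), zero_mul, zero_mul])]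
      rw [if_pos rfl, one_mul]
      unfold gFun
      by_cases hv : v i ≤ ((RCi' p τ Rhat i (x, v) : ℕ) : ℝ) / (Rhat i x : ℝ)
      · rw [if_pos ⟨hx, hv⟩, if_pos hv, one_mul]
      · rw [if_neg (fun hc => hv hc.2), if_neg hv, zero_mul]
    have hsum1 : ∀ v : Fin m → ℝ, ∑ k ∈ Finset.range (m + 1),
        (if RCi' p τ Rhat i (x, v) = k then (1 : ℝ) else 0) = 1 := by
      intro v
      rw [Finset.sum_ite_eq (Finset.range (m + 1)) (RCi' p τ Rhat i (x, v)) (fun _ => (1 : ℝ))]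
      exact if_pos (Finset.mem_range.2 (Nat.lt_succ_of_le (pruneCount_le _ _ _)))
    have ha_int : ∀ k : ℕ, Integrable
        (fun v : Fin m → ℝ => if RCi' p τ Rhat i (x, v) = k then (1 : ℝ) else 0) π :=
      fun k => integrable_of_bound _ (haF k) 1
        (fun v => by split_ifs <;> norm_num)
    have hterm_int : ∀ k ∈ Finset.range (m + 1), Integrable
        (fun v : Fin m → ℝ =>
          ((if RCi' p τ Rhat i (x, v) = k then (1 : ℝ) else 0)
            * (if v i ≤ (k : ℝ) / (Rhat i x : ℝ) then (1 : ℝ) else 0))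
            * ((1 : ℝ) / ((max k 1 : ℕ) : ℝ))) π :=
      fun k _ => integrable_of_bound _ (((haF k).mul (hbF k)).mul measurable_const) 1
        (fun v => abs_ite_mul_le _ _ (hCk k).1 (hCk k).2)
    calc ∫ v, gFun p τ Rhat i (x, v) ∂π
        = ∫ v, (∑ k ∈ Finset.range (m + 1),
            ((if RCi' p τ Rhat i (x, v) = k then (1 : ℝ) else 0)
              * (if v i ≤ (k : ℝ) / (Rhat i x : ℝ) then (1 : ℝ) else 0))
              * ((1 : ℝ) / ((max k 1 : ℕ) : ℝ))) ∂π := integral_congr_ae (ae_of_all _ hgx)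
      _ = ∑ k ∈ Finset.range (m + 1), ∫ v,
            ((if RCi' p τ Rhat i (x, v) = k then (1 : ℝ) else 0)
              * (if v i ≤ (k : ℝ) / (Rhat i x : ℝ) then (1 : ℝ) else 0))
              * ((1 : ℝ) / ((max k 1 : ℕ) : ℝ)) ∂π := integral_finset_sum _ hterm_int
      _ ≤ ∑ k ∈ Finset.range (m + 1),
            (∫ v, (if RCi' p τ Rhat i (x, v) = k then (1 : ℝ) else 0) ∂π)
              * ((1 : ℝ) / (Rhat i x : ℝ)) := by
          refine Finset.sum_le_sum (fun k _ => ?_)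
          rw [integral_mul_const]
          have hfac : ∫ v, (if RCi' p τ Rhat i (x, v) = k then (1 : ℝ) else 0)
              * (if v i ≤ (k : ℝ) / (Rhat i x : ℝ) then (1 : ℝ) else 0) ∂π
              = (∫ v, (if RCi' p τ Rhat i (x, v) = k then (1 : ℝ) else 0) ∂π)
                * (∫ v, (if v i ≤ (k : ℝ) / (Rhat i x : ℝ) then (1 : ℝ) else 0) ∂π) := by
            rw [hint (fun v => (if RCi' p τ Rhat i (x, v) = k then (1 : ℝ) else 0) * (if v i ≤ (k : ℝ) / (Rhat i x : ℝ) then (1 : ℝ) else 0)) ((haF k).mul (hbF k)), hint _ (haF k), hint _ (hbF k)]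
            exact (indepFun_RCi_ui u humeas huindep i x k _).integral_fun_mul_eq_mul_integral
              ((haF k).comp hU).aestronglyMeasurable ((hbF k).comp hU).aestronglyMeasurable
          rw [hfac]
          have h0a : 0 ≤ ∫ v, (if RCi' p τ Rhat i (x, v) = k then (1 : ℝ) else 0) ∂π :=
            integral_nonneg (fun v => by split_ifs <;> norm_num)
          have h0b : 0 ≤ ∫ v, (if v i ≤ (k : ℝ) / (Rhat i x : ℝ) then (1 : ℝ) else 0) ∂π :=
            integral_nonneg (fun v => by split_ifs <;> norm_num)
          have hb : ∫ v, (if v i ≤ (k : ℝ) / (Rhat i x : ℝ) then (1 : ℝ) else 0) ∂π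
              ≤ (k : ℝ) / (Rhat i x : ℝ) := by
            rw [hint _ (hbF k)]
            exact integral_ite_unif P (humeas i) (huunif i) (by positivity)
          have hkC : (k : ℝ) * ((1 : ℝ) / ((max k 1 : ℕ) : ℝ)) ≤ 1 := by
            rw [mul_one_div]
            refine div_le_one_of_le₀ ?_ (by positivity)
            exact_mod_cast le_max_left k 1
          set IA := ∫ v, (if RCi' p τ Rhat i (x, v) = k then (1 : ℝ) else 0) ∂π
          set IB := ∫ v, (if v i ≤ (k : ℝ) / (Rhat i x : ℝ) then (1 : ℝ) else 0) ∂π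
          calc IA * IB * ((1 : ℝ) / ((max k 1 : ℕ) : ℝ))
              ≤ IA * ((k : ℝ) / (Rhat i x : ℝ)) * ((1 : ℝ) / ((max k 1 : ℕ) : ℝ)) := by
                exact mul_le_mul_of_nonneg_right
                  (mul_le_mul_of_nonneg_left hb h0a) (hCk k).1
            _ = IA * (((k : ℝ) * ((1 : ℝ) / ((max k 1 : ℕ) : ℝ))) * ((1 : ℝ) / (Rhat i x : ℝ))) := by
                ring
            _ ≤ IA * (1 * ((1 : ℝ) / (Rhat i x : ℝ))) := by
                refine mul_le_mul_of_nonneg_left ?_ h0a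
                exact mul_le_mul_of_nonneg_right hkC (by positivity)
            _ = IA * ((1 : ℝ) / (Rhat i x : ℝ)) := by ring
      _ = (∑ k ∈ Finset.range (m + 1),
            ∫ v, (if RCi' p τ Rhat i (x, v) = k then (1 : ℝ) else 0) ∂π)
            * ((1 : ℝ) / (Rhat i x : ℝ)) := (Finset.sum_mul _ _ _).symm
      _ = (∫ v, ∑ k ∈ Finset.range (m + 1),
            (if RCi' p τ Rhat i (x, v) = k then (1 : ℝ) else 0) ∂π)
            * ((1 : ℝ) / (Rhat i x : ℝ)) := by
          rw [integral_finset_sum _ (fun k _ => ha_int k)]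
      _ = (∫ _v, (1 : ℝ) ∂π) * ((1 : ℝ) / (Rhat i x : ℝ)) := by
          rw [integral_congr_ae (ae_of_all _ hsum1)]
      _ = (1 : ℝ) / (Rhat i x : ℝ) := by simp


/-- Theorem 1, FDR control of the three-step conditional calibration
procedure: if for every true null `i ∈ H₀` the calibration condition
`E[1{p_i(X) ≤ τ_i(X)} / R̂_i(X)] ≤ α/m` holds, and the auxiliary uniforms `u_1, …, u_m` are
i.i.d. `Uniform(0,1)` independent of the data `X`, then the FDR of the final rejection set is
at most `α·|H₀|/m`. -/
theorem fdr_control_conditional_calibration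
    {Ω E : Type*} [MeasurableSpace Ω] [MeasurableSpace E]
    (P : Measure Ω) [IsProbabilityMeasure P]
    {m : ℕ} (hm : 0 < m) (α : ℝ) (hα : α ∈ Set.Ioc (0 : ℝ) 1)
    (H0 : Finset (Fin m))
    (X : Ω → E) (hX : Measurable X)
    (p τ : Fin m → E → ℝ) (Rhat : Fin m → E → ℕ)
    (hpmeas : ∀ i, Measurable (p i)) (hτmeas : ∀ i, Measurable (τ i))
    (hRmeas : ∀ i, Measurable (Rhat i))
    (hpval : ∀ i x, p i x ∈ Set.Icc (0 : ℝ) 1)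
    (hτval : ∀ i x, τ i x ∈ Set.Icc (0 : ℝ) 1)
    (hRval : ∀ i x, Rhat i x ∈ Set.Icc 1 m)
    (u : Fin m → Ω → ℝ) (humeas : ∀ i, Measurable (u i))
    (huindep : iIndepFun u P)
    (huunif : ∀ i, P.map (u i) = volume.restrict (Set.Icc (0 : ℝ) 1))
    (hXu : IndepFun X (fun ω i => u i ω) P)
    (hcal : ∀ i ∈ H0,
      ∫ ω, (if p i (X ω) ≤ τ i (X ω) then (1 : ℝ) / (Rhat i (X ω) : ℝ) else 0) ∂P
        ≤ α / m) :
    ∫ ω, ((finalRej (initRej (fun i => p i (X ω)) (fun i => τ i (X ω)))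
              (fun i => Rhat i (X ω)) (fun i => u i ω) ∩ H0).card : ℝ) /
          ((max (finalRej (initRej (fun i => p i (X ω)) (fun i => τ i (X ω)))
              (fun i => Rhat i (X ω)) (fun i => u i ω)).card 1 : ℕ) : ℝ) ∂P
      ≤ α * H0.card / m := by
  classical
  have hU : Measurable (fun ω (j : Fin m) => u j ω) := measurable_pi_lambda _ humeas
  have hΦ : Measurable (fun ω => (X ω, fun j : Fin m => u j ω)) := hX.prodMk hU
  have hprod : P.map (fun ω => (X ω, fun j : Fin m => u j ω))
      = (P.map X).prod (P.map (fun ω (j : Fin m) => u j ω)) :=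
    (indepFun_iff_map_prod_eq_prod_map_map hX.aemeasurable hU.aemeasurable).1 hXu
  haveI : IsProbabilityMeasure (P.map X) := Measure.isProbabilityMeasure_map hX.aemeasurable
  haveI : IsProbabilityMeasure (P.map (fun ω (j : Fin m) => u j ω)) :=
    Measure.isProbabilityMeasure_map hU.aemeasurable
  have hgmeas : ∀ i, Measurable (gFun p τ Rhat i) := measurable_gFun hpmeas hτmeas hRmeas
  have hgint : ∀ i : Fin m, Integrable (gFun p τ Rhat i)
      ((P.map X).prod (P.map (fun ω (j : Fin m) => u j ω))) :=
    fun i => integrable_of_bound _ (hgmeas i) 1 (abs_gFun_le_one i)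
  have hbdmeas : ∀ i : Fin m, Measurable
      (fun x => if p i x ≤ τ i x then (1 : ℝ) / (Rhat i x : ℝ) else 0) := fun i =>
    Measurable.ite (measurableSet_le (hpmeas i) (hτmeas i))
      (measurable_const.div (measurable_nat_cast_real (hRmeas i))) measurable_const
  have hbdabs : ∀ (i : Fin m) (x : E),
      |if p i x ≤ τ i x then (1 : ℝ) / (Rhat i x : ℝ) else 0| ≤ 1 := by
    intro i x
    split_ifs with h
    · rw [abs_of_nonneg (by positivity)]
      refine div_le_one_of_le₀ ?_ (by positivity)
      exact_mod_cast (hRval i x).1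
    · simp
  calc ∫ ω, ((finalRej (initRej (fun i => p i (X ω)) (fun i => τ i (X ω)))
              (fun i => Rhat i (X ω)) (fun i => u i ω) ∩ H0).card : ℝ) /
          ((max (finalRej (initRej (fun i => p i (X ω)) (fun i => τ i (X ω)))
              (fun i => Rhat i (X ω)) (fun i => u i ω)).card 1 : ℕ) : ℝ) ∂P
      = ∫ ω, ∑ i ∈ H0, gFun p τ Rhat i (X ω, fun j => u j ω) ∂P :=
        integral_congr_ae (ae_of_all _ (fun ω => sum_gFun_eq H0 (X ω, fun j => u j ω)))
    _ = ∑ i ∈ H0, ∫ ω, gFun p τ Rhat i (X ω, fun j => u j ω) ∂P :=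
        integral_finset_sum _ (fun i _ => integrable_of_bound _ ((hgmeas i).comp hΦ) 1
          (fun ω => abs_gFun_le_one i _))
    _ ≤ ∑ _i ∈ H0, α / m := by
        refine Finset.sum_le_sum (fun i hi => ?_)
        calc ∫ ω, gFun p τ Rhat i (X ω, fun j => u j ω) ∂P
            = ∫ z, gFun p τ Rhat i z
                ∂((P.map X).prod (P.map (fun ω (j : Fin m) => u j ω))) := by
              rw [← hprod]
              exact (integral_map hΦ.aemeasurable (hgmeas i).aestronglyMeasurable).symm
          _ = ∫ x, ∫ v, gFun p τ Rhat i (x, v) ∂(P.map (fun ω (j : Fin m) => u j ω))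
                ∂(P.map X) := integral_prod _ (hgint i)
          _ ≤ ∫ x, (if p i x ≤ τ i x then (1 : ℝ) / (Rhat i x : ℝ) else 0) ∂(P.map X) :=
              integral_mono ((hgint i).integral_prod_left)
                (integrable_of_bound _ (hbdmeas i) 1 (hbdabs i))
                (fun x => inner_integral_bound P hpmeas hτmeas hRmeas hRval u humeas
                  huindep huunif i x)
          _ = ∫ ω, (if p i (X ω) ≤ τ i (X ω) then (1 : ℝ) / (Rhat i (X ω) : ℝ) else 0) ∂P :=
              integral_map hX.aemeasurable (hbdmeas i).aestronglyMeasurable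
          _ ≤ α / m := hcal i hi
    _ = α * H0.card / m := by
        rw [Finset.sum_const, nsmul_eq_mul]
        ring
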